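/- Generalized q-binomial theorem: sum_{n≥0} R_n(x,y;u|q) z^n/(q;q)_n = e_q(yz,u) / (xz;q)_∞, valid as formal power series in z (or for 0<|q|<1, |u|≤1, |xz|<1). -/

import Mathlib

/-- The q-shifted factorial `(a;q)_n = ∏_{j=0}^{n-1} (1 - a q^j)`. -/
noncomputable def qPoch (a q : ℂ) (n : ℕ) : ℂ := ∏ j ∈ Finset.range n, (1 - a * q ^ j)

/-- The Gaussian binomial coefficient `[n choose k]_q = (q;q)_n / ((q;q)_k (q;q)_{n-k})`. -/
noncomputable def qBinom (q : ℂ) (n k : ℕ) : ℂ := qPoch q q n / (qPoch q q k * qPoch q q (n - k))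

/-- The u-deformed homogeneous polynomial
`R_n(x,y;u|q) = ∑_{k=0}^n [n choose k]_q u^{C(k,2)} x^{n-k} y^k`. -/
noncomputable def Rpoly (q : ℂ) (n : ℕ) (x y u : ℂ) : ℂ :=
  ∑ k ∈ Finset.range (n + 1), qBinom q n k * u ^ (k.choose 2) * x ^ (n - k) * y ^ k

/-- The deformed q-exponential `e_q(w,u) = ∑_{k≥0} u^{C(k,2)} w^k / (q;q)_k`. -/
noncomputable def deq (q u w : ℂ) : ℂ := ∑' k : ℕ, u ^ (k.choose 2) * w ^ k / qPoch q q k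

/-- The infinite q-shifted factorial `(a;q)_∞ = ∏_{j≥0} (1 - a q^j)`. -/
noncomputable def qPochInf (a q : ℂ) : ℂ := ∏' j : ℕ, (1 - a * q ^ j)

open Finset Filter Topology

lemma qPoch_succ (a q : ℂ) (n : ℕ) : qPoch a q (n + 1) = qPoch a q n * (1 - a * q ^ n) :=
  Finset.prod_range_succ _ _

lemma qPoch_factor_ne_zero {a q : ℂ} (ha : ‖a‖ < 1) (hq : ‖q‖ ≤ 1) (j : ℕ) :
    (1 : ℂ) - a * q ^ j ≠ 0 := by
  intro h
  have h1 : a * q ^ j = 1 := by linear_combination -h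
  have : ‖a * q ^ j‖ < 1 := by
    rw [norm_mul, norm_pow]
    calc ‖a‖ * ‖q‖ ^ j ≤ ‖a‖ * 1 := by
          apply mul_le_mul_of_nonneg_left (pow_le_one₀ (norm_nonneg q) hq) (norm_nonneg a)
      _ = ‖a‖ := mul_one _
      _ < 1 := ha
  rw [h1] at this
  simp at this

lemma qPoch_ne_zero {a q : ℂ} (ha : ‖a‖ < 1) (hq : ‖q‖ ≤ 1) (n : ℕ) : qPoch a q n ≠ 0 :=
  Finset.prod_ne_zero_iff.2 fun j _ => qPoch_factor_ne_zero ha hq j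

lemma choose_two_succ (k : ℕ) : (k + 1).choose 2 = k.choose 2 + k := by
  rw [Nat.choose_succ_succ]
  simp [Nat.add_comm]

/-- Summability of the norms of the deformed q-exponential terms. -/
lemma summable_norm_deq (q u w : ℂ) (hq : ‖q‖ < 1) (hu : ‖u‖ ≤ 1) (hw : ‖w‖ < 1) :
    Summable (fun k : ℕ => ‖u ^ (k.choose 2) * w ^ k / qPoch q q k‖) := by
  set r : ℝ := (1 + ‖w‖) / 2 with hr
  have hr1 : r < 1 := by rw [hr]; linarith
  have hwr : ‖w‖ < r := by rw [hr]; linarith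
  have hr0 : 0 < r := by rw [hr]; positivity
  apply summable_of_ratio_norm_eventually_le hr1
  have hqq : ‖q‖ ≤ 1 := hq.le
  -- eventually ‖q‖^(k+1) ≤ 1 - ‖w‖/r
  have hlim : Tendsto (fun k : ℕ => ‖q‖ ^ (k + 1)) atTop (𝓝 0) := by
    have := tendsto_pow_atTop_nhds_zero_of_lt_one (norm_nonneg q) hq
    exact this.comp (tendsto_add_atTop_nat 1)
  have hpos : (0 : ℝ) < 1 - ‖w‖ / r := by
    have : ‖w‖ / r < 1 := (div_lt_one hr0).2 hwr
    linarith
  filter_upwards [hlim.eventually_le_const hpos] with k hk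
  -- the ratio bound
  have hfac : (1 : ℂ) - q * q ^ k ≠ 0 := qPoch_factor_ne_zero hq hqq k
  have hnorm_fac : 1 - ‖q‖ ^ (k + 1) ≤ ‖(1 : ℂ) - q * q ^ k‖ := by
    have h1 : ‖(1 : ℂ)‖ - ‖q * q ^ k‖ ≤ ‖(1 : ℂ) - q * q ^ k‖ := norm_sub_norm_le _ _
    rw [norm_one, norm_mul, norm_pow, ← pow_succ'] at h1
    exact h1
  have key : u ^ ((k + 1).choose 2) * w ^ (k + 1) / qPoch q q (k + 1)
      = (u ^ k * w / (1 - q * q ^ k)) * (u ^ (k.choose 2) * w ^ k / qPoch q q k) := by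
    rw [choose_two_succ, qPoch_succ, pow_add, pow_succ]
    have h2 : qPoch q q k ≠ 0 := qPoch_ne_zero hq hqq k
    field_simp
  rw [norm_norm, norm_norm, key, norm_mul]
  have hb : ‖u ^ k * w / (1 - q * q ^ k)‖ ≤ r := by
    rw [norm_div, norm_mul, norm_pow]
    have h1 : ‖u‖ ^ k * ‖w‖ ≤ ‖w‖ := by
      have := pow_le_one₀ (norm_nonneg u) hu (n := k)
      nlinarith [norm_nonneg w]
    have h3 : ‖w‖ / r ≤ ‖(1 : ℂ) - q * q ^ k‖ := by linarith
    have h5 : (0:ℝ) < ‖(1 : ℂ) - q * q ^ k‖ := norm_pos_iff.2 hfac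
    rw [div_le_iff₀ h5]
    calc ‖u‖ ^ k * ‖w‖ ≤ ‖w‖ := h1
      _ = r * (‖w‖ / r) := by field_simp
      _ ≤ r * ‖(1 : ℂ) - q * q ^ k‖ := by
          exact mul_le_mul_of_nonneg_left h3 hr0.le
  calc ‖u ^ k * w / (1 - q * q ^ k)‖ * ‖u ^ (k.choose 2) * w ^ k / qPoch q q k‖
      ≤ r * ‖u ^ (k.choose 2) * w ^ k / qPoch q q k‖ :=
        mul_le_mul_of_nonneg_right hb (norm_nonneg _)

lemma summable_deq (q u w : ℂ) (hq : ‖q‖ < 1) (hu : ‖u‖ ≤ 1) (hw : ‖w‖ < 1) :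
    Summable (fun k : ℕ => u ^ (k.choose 2) * w ^ k / qPoch q q k) :=
  (summable_norm_deq q u w hq hu hw).of_norm

lemma summable_norm_deq1 (q w : ℂ) (hq : ‖q‖ < 1) (hw : ‖w‖ < 1) :
    Summable (fun k : ℕ => ‖w ^ k / qPoch q q k‖) := by
  have := summable_norm_deq q 1 w hq (by norm_num) hw
  simpa using this

lemma summable_deq1 (q w : ℂ) (hq : ‖q‖ < 1) (hw : ‖w‖ < 1) :
    Summable (fun k : ℕ => w ^ k / qPoch q q k) :=
  (summable_norm_deq1 q w hq hw).of_norm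

lemma deq_one_eq (q w : ℂ) : deq q 1 w = ∑' k : ℕ, w ^ k / qPoch q q k := by
  unfold deq; simp

/-- Functional equation one step: `F(v)(1-v) = F(qv)`. -/
lemma deq_step (q v : ℂ) (hq : ‖q‖ < 1) (hv : ‖v‖ < 1) :
    deq q 1 v * (1 - v) = deq q 1 (q * v) := by
  have hqq : ‖q‖ ≤ 1 := hq.le
  have hqv : ‖q * v‖ < 1 := by
    rw [norm_mul]
    calc ‖q‖ * ‖v‖ ≤ 1 * ‖v‖ := mul_le_mul_of_nonneg_right hqq (norm_nonneg v)
      _ = ‖v‖ := one_mul _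
      _ < 1 := hv
  have hsg : Summable (fun m : ℕ => v ^ m / qPoch q q m) := summable_deq1 q v hq hv
  have hsg' : Summable (fun m : ℕ => (q * v) ^ m / qPoch q q m) := summable_deq1 q (q * v) hq hqv
  have hsub : Summable (fun m : ℕ => v ^ m / qPoch q q m - (q * v) ^ m / qPoch q q m) :=
    hsg.sub hsg'
  have ht0 : v ^ 0 / qPoch q q 0 - (q * v) ^ 0 / qPoch q q 0 = 0 := by simp [qPoch]
  have hts : ∀ m : ℕ, v ^ (m + 1) / qPoch q q (m + 1) - (q * v) ^ (m + 1) / qPoch q q (m + 1)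
      = v * (v ^ m / qPoch q q m) := by
    intro m
    have h1 : qPoch q q (m + 1) = qPoch q q m * (1 - q * q ^ m) := qPoch_succ _ _ _
    have h2 : qPoch q q m ≠ 0 := qPoch_ne_zero hq hqq m
    have h3 : (1 : ℂ) - q * q ^ m ≠ 0 := qPoch_factor_ne_zero hq hqq m
    rw [h1, mul_pow]
    field_simp
    ring
  have key : (∑' m : ℕ, v ^ m / qPoch q q m) - (∑' m : ℕ, (q * v) ^ m / qPoch q q m)
      = v * ∑' m : ℕ, v ^ m / qPoch q q m := by
    rw [← Summable.tsum_sub hsg hsg', Summable.tsum_eq_zero_add hsub, ht0, zero_add, tsum_congr hts,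
      tsum_mul_left]
  rw [deq_one_eq, deq_one_eq]
  linear_combination key

lemma norm_pow_mul_lt {q w : ℂ} (hq : ‖q‖ < 1) (hw : ‖w‖ < 1) (n : ℕ) : ‖q ^ n * w‖ ≤ ‖w‖ := by
  rw [norm_mul, norm_pow]
  calc ‖q‖ ^ n * ‖w‖ ≤ 1 * ‖w‖ :=
        mul_le_mul_of_nonneg_right (pow_le_one₀ (norm_nonneg q) hq.le) (norm_nonneg w)
    _ = ‖w‖ := one_mul _

lemma deq_iterate (q w : ℂ) (hq : ‖q‖ < 1) (hw : ‖w‖ < 1) (n : ℕ) :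
    deq q 1 w * qPoch w q n = deq q 1 (q ^ n * w) := by
  induction n with
  | zero => simp [qPoch]
  | succ n ih =>
    have hv : ‖q ^ n * w‖ < 1 := lt_of_le_of_lt (norm_pow_mul_lt hq hw n) hw
    have step := deq_step q (q ^ n * w) hq hv
    rw [qPoch_succ, ← mul_assoc, ih]
    calc deq q 1 (q ^ n * w) * (1 - w * q ^ n)
        = deq q 1 (q ^ n * w) * (1 - q ^ n * w) := by ring_nf
      _ = deq q 1 (q * (q ^ n * w)) := step
      _ = deq q 1 (q ^ (n + 1) * w) := by rw [← mul_assoc, ← pow_succ']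

lemma deq_tendsto_one (q w : ℂ) (hq : ‖q‖ < 1) (hw : ‖w‖ < 1) :
    Tendsto (fun n : ℕ => deq q 1 (q ^ n * w)) atTop (𝓝 1) := by
  have hqq : ‖q‖ ≤ 1 := hq.le
  -- the majorant sum
  have hM : Summable (fun m : ℕ => ‖w‖ ^ m / ‖qPoch q q (m + 1)‖) := by
    refine Summable.of_nonneg_of_le (f := fun m => (1 - ‖q‖)⁻¹ * ‖w ^ m / qPoch q q m‖)
      (fun m => div_nonneg (pow_nonneg (norm_nonneg w) m) (norm_nonneg _)) (fun m => ?_)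
      (((summable_norm_deq1 q w hq hw).mul_left _))
    have h1 : qPoch q q (m + 1) = qPoch q q m * (1 - q * q ^ m) := qPoch_succ _ _ _
    have hfac : 1 - ‖q‖ ≤ ‖(1 : ℂ) - q * q ^ m‖ := by
      have h2 : ‖(1 : ℂ)‖ - ‖q * q ^ m‖ ≤ ‖(1 : ℂ) - q * q ^ m‖ := norm_sub_norm_le _ _
      rw [norm_one, norm_mul, norm_pow] at h2
      have h3 : ‖q‖ * ‖q‖ ^ m ≤ ‖q‖ := by
        calc ‖q‖ * ‖q‖ ^ m ≤ ‖q‖ * 1 :=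
          mul_le_mul_of_nonneg_left (pow_le_one₀ (norm_nonneg q) hqq) (norm_nonneg q)
          _ = ‖q‖ := mul_one _
      linarith
    have hq1 : (0:ℝ) < 1 - ‖q‖ := by linarith
    have hp : (0:ℝ) < ‖qPoch q q m‖ := norm_pos_iff.2 (qPoch_ne_zero hq hqq m)
    show _ ≤ (1 - ‖q‖)⁻¹ * ‖w ^ m / qPoch q q m‖
    rw [h1, norm_mul, norm_div, norm_pow]
    calc ‖w‖ ^ m / (‖qPoch q q m‖ * ‖(1:ℂ) - q * q ^ m‖)
        ≤ ‖w‖ ^ m / (‖qPoch q q m‖ * (1 - ‖q‖)) := by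
          gcongr
      _ = (1 - ‖q‖)⁻¹ * (‖w‖ ^ m / ‖qPoch q q m‖) := by
          field_simp
  set M : ℝ := ∑' m : ℕ, ‖w‖ ^ m / ‖qPoch q q (m + 1)‖ with hMdef
  have hM0 : 0 ≤ M := tsum_nonneg (fun m => by positivity)
  -- bound ‖deq q 1 v - 1‖ ≤ ‖v‖ * M for ‖v‖ ≤ ‖w‖
  have hbound : ∀ v : ℂ, ‖v‖ ≤ ‖w‖ → ‖deq q 1 v - 1‖ ≤ ‖v‖ * M := by
    intro v hv
    have hv1 : ‖v‖ < 1 := lt_of_le_of_lt hv hw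
    have hs : Summable (fun m : ℕ => v ^ m / qPoch q q m) := summable_deq1 q v hq hv1
    have hshift : Summable (fun m : ℕ => v ^ (m + 1) / qPoch q q (m + 1)) := by
      exact_mod_cast (summable_nat_add_iff 1).2 hs
    have h0 : deq q 1 v = 1 + ∑' m : ℕ, v ^ (m + 1) / qPoch q q (m + 1) := by
      rw [deq_one_eq, Summable.tsum_eq_zero_add hs]
      simp [qPoch]
    rw [h0, add_sub_cancel_left]
    have hnorm : Summable (fun m : ℕ => ‖v ^ (m + 1) / qPoch q q (m + 1)‖) := by
      exact_mod_cast (summable_nat_add_iff 1).2 (summable_norm_deq1 q v hq hv1)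
    calc ‖∑' m : ℕ, v ^ (m + 1) / qPoch q q (m + 1)‖
        ≤ ∑' m : ℕ, ‖v ^ (m + 1) / qPoch q q (m + 1)‖ := norm_tsum_le_tsum_norm hnorm
      _ ≤ ∑' m : ℕ, ‖v‖ * (‖w‖ ^ m / ‖qPoch q q (m + 1)‖) := by
          apply Summable.tsum_le_tsum _ hnorm (hM.mul_left _)
          intro m
          have hc : (0:ℝ) < ‖qPoch q q (m+1)‖ := norm_pos_iff.2 (qPoch_ne_zero hq hqq (m+1))
          rw [norm_div, norm_pow, pow_succ', mul_div_assoc]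
          gcongr
      _ = ‖v‖ * M := tsum_mul_left
  -- squeeze
  rw [tendsto_iff_norm_sub_tendsto_zero]
  apply squeeze_zero (fun n => norm_nonneg _) (g := fun n => ‖w‖ * M * ‖q‖ ^ n)
  · intro n
    have := hbound (q ^ n * w) (norm_pow_mul_lt hq hw n)
    rw [norm_mul, norm_pow] at this
    calc ‖deq q 1 (q ^ n * w) - 1‖ ≤ ‖q‖ ^ n * ‖w‖ * M := this
      _ = ‖w‖ * M * ‖q‖ ^ n := by ring
  · have := tendsto_pow_atTop_nhds_zero_of_lt_one (norm_nonneg q) hq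
    simpa using (this.const_mul (‖w‖ * M))

lemma multipliable_qPoch (w q : ℂ) (hq : ‖q‖ < 1) (hw : ‖w‖ < 1) :
    Multipliable (fun j : ℕ => (1 : ℂ) - w * q ^ j) := by
  have hfn : ∀ j : ℕ, (1 : ℂ) - w * q ^ j ≠ 0 := qPoch_factor_ne_zero hw hq.le
  apply Complex.multipliable_of_summable_log
  -- Summable (fun j => Complex.log (1 - w * q ^ j))
  apply Summable.of_norm_bounded_eventually (g := fun j => 3 / 2 * (‖w‖ * ‖q‖ ^ j))
  · exact ((summable_geometric_of_lt_one (norm_nonneg q) hq).mul_left _).mul_left _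
  · rw [Nat.cofinite_eq_atTop]
    have hlim : Tendsto (fun j : ℕ => ‖w‖ * ‖q‖ ^ j) atTop (𝓝 0) := by
      simpa using (tendsto_pow_atTop_nhds_zero_of_lt_one (norm_nonneg q) hq).const_mul ‖w‖
    filter_upwards [hlim.eventually_le_const (by norm_num : (0:ℝ) < 1/2)] with j hj
    have h1 : ‖-(w * q ^ j)‖ ≤ 1 / 2 := by rwa [norm_neg, norm_mul, norm_pow]
    have := Complex.norm_log_one_add_half_le_self h1
    rw [norm_neg, norm_mul, norm_pow] at this
    calc ‖Complex.log (1 - w * q ^ j)‖ = ‖Complex.log (1 + -(w * q ^ j))‖ := by ring_nf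
      _ ≤ 3 / 2 * (‖w‖ * ‖q‖ ^ j) := by
          have := Complex.norm_log_one_add_half_le_self h1
          rw [norm_neg, norm_mul, norm_pow] at this
          linarith

lemma euler_identity (q w : ℂ) (hq : ‖q‖ < 1) (hw : ‖w‖ < 1) :
    deq q 1 w * qPochInf w q = 1 := by
  have hmul := multipliable_qPoch w q hq hw
  have hprod : Tendsto (fun n : ℕ => qPoch w q n) atTop (𝓝 (qPochInf w q)) :=
    hmul.hasProd.tendsto_prod_nat
  have h1 : Tendsto (fun n : ℕ => deq q 1 w * qPoch w q n) atTop
      (𝓝 (deq q 1 w * qPochInf w q)) := hprod.const_mul _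
  have h2 : Tendsto (fun n : ℕ => deq q 1 w * qPoch w q n) atTop (𝓝 1) := by
    have := deq_tendsto_one q w hq hw
    apply this.congr
    intro n
    exact (deq_iterate q w hq hw n).symm
  exact tendsto_nhds_unique h1 h2

theorem generalized_q_binomial_theorem (q u x y z : ℂ) (hq0 : 0 < ‖q‖) (hq : ‖q‖ < 1)
    (hu : ‖u‖ ≤ 1) (hxz : ‖x * z‖ < 1) (hyz : ‖y * z‖ < 1) :
    (∑' n : ℕ, Rpoly q n x y u * z ^ n / qPoch q q n) = deq q u (y * z) / qPochInf (x * z) q := by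
  have hqq : ‖q‖ ≤ 1 := hq.le
  set A : ℕ → ℂ := fun k => u ^ (k.choose 2) * (y * z) ^ k / qPoch q q k with hA
  set B : ℕ → ℂ := fun m => (x * z) ^ m / qPoch q q m with hB
  have hAn : Summable (fun k => ‖A k‖) := summable_norm_deq q u (y * z) hq hu hyz
  have hBn : Summable (fun m => ‖B m‖) := summable_norm_deq1 q (x * z) hq hxz
  have hterm : ∀ n : ℕ, Rpoly q n x y u * z ^ n / qPoch q q n
      = ∑ kl ∈ Finset.HasAntidiagonal.antidiagonal n, A kl.1 * B kl.2 := by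
    intro n
    rw [Finset.Nat.sum_antidiagonal_eq_sum_range_succ_mk]
    rw [Rpoly, Finset.sum_mul, Finset.sum_div]
    apply Finset.sum_congr rfl
    intro k hk
    have hkn : k ≤ n := Nat.lt_succ_iff.1 (Finset.mem_range.1 hk)
    have hzn : (z : ℂ) ^ n = z ^ k * z ^ (n - k) := by
      rw [← pow_add]; congr 1; omega
    have h2 : qPoch q q n ≠ 0 := qPoch_ne_zero hq hqq n
    have h3 : qPoch q q k ≠ 0 := qPoch_ne_zero hq hqq k
    have h4 : qPoch q q (n - k) ≠ 0 := qPoch_ne_zero hq hqq (n - k)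
    simp only [hA, hB, qBinom]
    rw [hzn]
    field_simp
    ring
  calc (∑' n : ℕ, Rpoly q n x y u * z ^ n / qPoch q q n)
      = ∑' n : ℕ, ∑ kl ∈ Finset.HasAntidiagonal.antidiagonal n, A kl.1 * B kl.2 := tsum_congr hterm
    _ = (∑' k, A k) * (∑' m, B m) :=
        (tsum_mul_tsum_eq_tsum_sum_antidiagonal_of_summable_norm hAn hBn).symm
    _ = deq q u (y * z) * deq q 1 (x * z) := by rw [← deq_one_eq]; rfl
    _ = deq q u (y * z) / qPochInf (x * z) q := by
        have he := euler_identity q (x * z) hq hxz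
        have hP : qPochInf (x * z) q ≠ 0 := right_ne_zero_of_mul_eq_one he
        rw [eq_div_iff hP, mul_assoc, he, mul_one]
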